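/- The union A ∪ B of A = {(x, sin(1/x)) : 0 < x ≤ 1} ∪ {(0, y) : −1 ≤ y ≤ 1} and B = {(x, 0) : −1 ≤ x ≤ 0} in ℝ² is connected but not approximately path-connected, even though A and B are each approximately path-connected and A ∩ B ≠ ∅. -/

import Mathlib

/-- A topological space `X` is approximately path-connected if for every finite
collection of nonempty open sets `V k` there is a continuous path `γ : [0,1] → X`
meeting each `V k` at some interior time `t ∈ (0,1)`. -/
def ApproxPathConnected (X : Type*) [TopologicalSpace X] : Prop :=
  ∀ (s : ℕ) (V : Fin s → Set X), (∀ k, IsOpen (V k)) → (∀ k, (V k).Nonempty) →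
    ∃ γ : C(unitInterval, X), ∀ k, ∃ t : unitInterval,
      (t : ℝ) ∈ Set.Ioo (0 : ℝ) 1 ∧ γ t ∈ V k

/-- The closed topologist's sine curve. -/
def sineCurve : Set (ℝ × ℝ) :=
  {p | ∃ x : ℝ, 0 < x ∧ x ≤ 1 ∧ p = (x, Real.sin (1 / x))} ∪
    {p | p.1 = 0 ∧ p.2 ∈ Set.Icc (-1 : ℝ) 1}

/-- The segment `{(x, 0) : -1 ≤ x ≤ 0}`. -/
def segB : Set (ℝ × ℝ) := {p | p.2 = 0 ∧ p.1 ∈ Set.Icc (-1 : ℝ) 0}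

open Set Real Filter

noncomputable def sinePt : ℝ → ℝ × ℝ := fun x => (x, Real.sin (1 / x))

lemma sinePt_continuousAt {x : ℝ} (hx : x ≠ 0) : ContinuousAt sinePt x := by
  apply ContinuousAt.prodMk continuousAt_id
  exact Real.continuous_sin.continuousAt.comp (continuousAt_const.div continuousAt_id hx)

lemma vert_mem_closure {y : ℝ} (hy : y ∈ Set.Icc (-1 : ℝ) 1) :
    ((0 : ℝ), y) ∈ closure (sinePt '' Set.Ioo 0 1) := by
  have hπ := Real.pi_gt_three
  set c : ℕ → ℝ := fun n => Real.arcsin y + (n + 1) * (2 * π) with hc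
  have hc1 : ∀ n, (1 : ℝ) < c n := by
    intro n
    have h1 := Real.neg_pi_div_two_le_arcsin y
    have h2 : (1 : ℝ) ≤ (n + 1 : ℕ) := by exact_mod_cast Nat.one_le_iff_ne_zero.mpr (Nat.succ_ne_zero n)
    have : (2 * π : ℝ) ≤ ((n+1 : ℕ) : ℝ) * (2 * π) := le_mul_of_one_le_left (by linarith) h2
    simp only [hc]
    push_cast at this ⊢
    nlinarith
  have hxpos : ∀ n, (c n)⁻¹ ∈ Set.Ioo (0:ℝ) 1 := by
    intro n
    have h1 := hc1 n
    constructor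
    · positivity
    · exact inv_lt_one_of_one_lt₀ h1
  have hsin : ∀ n, sinePt (c n)⁻¹ = ((c n)⁻¹, y) := by
    intro n
    unfold sinePt
    have h1 := hc1 n
    have : (1 : ℝ) / (c n)⁻¹ = c n := by
      rw [one_div, inv_inv]
    rw [this]
    have : Real.sin (c n) = y := by
      have := Real.sin_add_nat_mul_two_pi (Real.arcsin y) (n+1)
      push_cast at this
      simp only [hc]
      push_cast
      rw [this]
      exact Real.sin_arcsin hy.1 hy.2
    rw [this]
  have htend : Tendsto (fun n : ℕ => ((c n)⁻¹, y)) atTop (nhds ((0:ℝ), y)) := by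
    rw [nhds_prod_eq]
    apply Tendsto.prodMk _ tendsto_const_nhds
    apply tendsto_inv_atTop_zero.comp
    apply tendsto_atTop_add_const_left
    apply Tendsto.atTop_mul_const (by positivity)
    exact tendsto_natCast_atTop_atTop.atTop_add tendsto_const_nhds
  apply mem_closure_of_tendsto htend
  filter_upwards with n
  exact ⟨(c n)⁻¹, hxpos n, hsin n⟩

lemma sineCurve_subset_closure : sineCurve ⊆ closure (sinePt '' Set.Ioo 0 1) := by
  rintro p (⟨x, hx0, hx1, rfl⟩ | ⟨h1, h2⟩)
  · have hcw : ContinuousWithinAt sinePt (Set.Ioo 0 1) x :=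
      (sinePt_continuousAt hx0.ne').continuousWithinAt
    have hxcl : x ∈ closure (Set.Ioo (0:ℝ) 1) := by
      rw [closure_Ioo one_ne_zero.symm]
      exact ⟨hx0.le, hx1⟩
    exact hcw.mem_closure_image hxcl
  · have : p = ((0:ℝ), p.2) := by
      ext <;> simp [h1]
    rw [this]
    exact vert_mem_closure h2

lemma key_approx (A : Set (ℝ × ℝ)) (f : ℝ → ℝ × ℝ) (a b : ℝ) (hab : a < b)
    (hf : ContinuousOn f (Set.Ioo a b)) (hmem : ∀ t ∈ Set.Ioo a b, f t ∈ A)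
    (hdense : A ⊆ closure (f '' Set.Ioo a b)) :
    ApproxPathConnected ↥A := by
  intro s V hVopen hVne
  have hmid : f ((a+b)/2) ∈ A := hmem _ ⟨by linarith, by linarith⟩
  have H : ∀ k, ∃ x, x ∈ Set.Ioo a b ∧ ∀ (hfx : f x ∈ A), (⟨f x, hfx⟩ : ↥A) ∈ V k := by
    intro k
    obtain ⟨v, hv⟩ := hVne k
    obtain ⟨U, hUopen, hUeq⟩ := isOpen_induced_iff.mp (hVopen k)
    have hvU : (v : ℝ × ℝ) ∈ U := by
      rw [← hUeq] at hv; exact hv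
    have hvcl : (v : ℝ × ℝ) ∈ closure (f '' Set.Ioo a b) := hdense v.2
    obtain ⟨q, hqU, x, hx, rfl⟩ := _root_.mem_closure_iff.mp hvcl U hUopen hvU
    refine ⟨x, hx, fun hfx => ?_⟩
    rw [← hUeq]
    exact hqU
  choose x hxmem hxV using H
  rcases Nat.eq_zero_or_pos s with hs | hs
  · subst hs
    exact ⟨⟨fun _ => ⟨f ((a+b)/2), hmid⟩, continuous_const⟩, fun k => k.elim0⟩
  haveI : Nonempty (Fin s) := ⟨⟨0, hs⟩⟩
  set m := Finset.univ.inf' Finset.univ_nonempty x with hm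
  set M := Finset.univ.sup' Finset.univ_nonempty x with hM
  obtain ⟨k₀, -, hk₀⟩ := Finset.exists_mem_eq_inf' (Finset.univ_nonempty) x
  obtain ⟨k₁, -, hk₁⟩ := Finset.exists_mem_eq_sup' (Finset.univ_nonempty) x
  have ham : a < m := by rw [hm, hk₀]; exact (hxmem k₀).1
  have hMb : M < b := by rw [hM, hk₁]; exact (hxmem k₁).2
  have hmx : ∀ k, m ≤ x k := fun k => Finset.inf'_le _ (Finset.mem_univ k)
  have hxM : ∀ k, x k ≤ M := fun k => Finset.le_sup' _ (Finset.mem_univ k)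
  have hmM : m ≤ M := le_trans (hmx k₁) (by rw [← hk₁, ← hM])
  set m' := (a + m) / 2 with hm'
  set M' := (M + b) / 2 with hM'
  have hd : (0:ℝ) < M' - m' := by simp only [hm', hM']; linarith
  set d := M' - m' with hdd
  set ℓ : ℝ → ℝ := fun t => m' + t * d with hℓ
  have hma : a < m' := by simp only [hm']; linarith
  have hMb' : M' < b := by simp only [hM']; linarith
  have hd' : m' + d = M' := by simp only [hdd]; ring
  have hℓmem : ∀ t : unitInterval, ℓ t ∈ Set.Ioo a b := by
    intro t
    have h0 := t.2.1
    have h1 := t.2.2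
    have hta : (0:ℝ) ≤ (t:ℝ) * d := mul_nonneg h0 hd.le
    have htb : (t:ℝ) * d ≤ d := by nlinarith
    have hℓt : ℓ ↑t = m' + ↑t * d := rfl
    constructor
    · rw [hℓt]; linarith
    · rw [hℓt]; linarith
  refine ⟨⟨fun t => ⟨f (ℓ t), hmem _ (hℓmem t)⟩, ?_⟩, ?_⟩
  · apply Continuous.subtype_mk
    apply hf.comp_continuous
    · apply Continuous.add continuous_const
      exact (continuous_subtype_val.mul continuous_const)
    · exact hℓmem
  · intro k
    have hxk0 : m' < x k := lt_of_lt_of_le (show m' < m by simp only [hm']; linarith) (hmx k)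
    have hxk1 : x k < M' := lt_of_le_of_lt (hxM k) (by simp only [hM']; linarith)
    have ht0 : (0:ℝ) < (x k - m') / d := div_pos (by linarith) hd
    have ht1 : (x k - m') / d < 1 := (div_lt_one hd).mpr (by linarith)
    refine ⟨⟨(x k - m') / d, ht0.le, ht1.le⟩, ⟨ht0, ht1⟩, ?_⟩
    have hℓx : ℓ ((x k - m') / d) = x k := by
      show m' + (x k - m') / d * d = x k
      field_simp
      ring
    simp only [ContinuousMap.coe_mk]
    have heq : (⟨f (ℓ ((x k - m')/d)), hmem _ (hℓmem ⟨(x k - m') / d, ht0.le, ht1.le⟩)⟩ : ↥A)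
        = ⟨f (x k), hmem _ (hxmem k)⟩ := by
      congr 1
      rw [hℓx]
    exact heq ▸ hxV k (hmem _ (hxmem k))

lemma no_path_aux (g : ℝ → ℝ × ℝ) (hg : Continuous g)
    (hrange : ∀ t, g t ∈ sineCurve ∪ segB)
    (a b : ℝ) (hab : a < b) (ha : 0 < (g a).1) (hb : (g b).1 < 0) : False := by
  have hπ := Real.pi_gt_three
  set S : Set ℝ := {t ∈ Set.Icc a b | (g t).1 ≤ 0} with hS
  have hSclosed : IsClosed S := by
    apply IsClosed.inter isClosed_Icc
    exact isClosed_le (continuous_fst.comp hg) continuous_const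
  have hSne : S.Nonempty := ⟨b, ⟨le_of_lt hab, le_refl b⟩, hb.le⟩
  have hSbdd : BddBelow S := ⟨a, fun t ht => ht.1.1⟩
  set T := sInf S with hT
  have hTmem : T ∈ S := hSclosed.csInf_mem hSne hSbdd
  have haT : a < T := by
    rcases lt_or_eq_of_le (le_csInf hSne (fun t ht => ht.1.1)) with h | h
    · exact h
    · exfalso
      rw [hT, ← h] at hTmem
      linarith [hTmem.2]
  have hTb : T ≤ b := hTmem.1.2
  have hpos : ∀ t ∈ Set.Ico a T, 0 < (g t).1 := by
    intro t ht
    by_contra hc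
    push_neg at hc
    exact absurd ⟨⟨ht.1, le_trans ht.2.le hTb⟩, hc⟩ (notMem_of_lt_csInf ht.2 hSbdd)
  have hT0 : (g T).1 = 0 := by
    refine le_antisymm hTmem.2 ?_
    have hsub : Set.Ico a T ⊆ {t | 0 ≤ (g t).1} := fun t ht => (hpos t ht).le
    have hcl : closure (Set.Ico a T) ⊆ {t | 0 ≤ (g t).1} :=
      (IsClosed.closure_subset_iff (isClosed_le continuous_const (continuous_fst.comp hg))).mpr hsub
    apply hcl
    rw [closure_Ico haT.ne]
    exact ⟨haT.le, le_refl T⟩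
  set y₀ := (g T).2 with hy₀
  have hcont2 : ContinuousAt (fun t => (g t).2) T := (continuous_snd.comp hg).continuousAt
  have hev : ∀ᶠ t in nhds T, dist ((g t).2) y₀ < 1 := Metric.tendsto_nhds.mp hcont2 1 one_pos
  obtain ⟨δ, hδpos, hδ⟩ := Metric.eventually_nhds_iff.mp hev
  set t₁ := max a (T - δ / 2) with ht₁
  have ht₁T : t₁ < T := max_lt haT (by linarith)
  have ht₁a : a ≤ t₁ := le_max_left _ _
  have hxt₁ : 0 < (g t₁).1 := hpos t₁ ⟨ht₁a, ht₁T⟩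
  have ht₁close : T - t₁ < δ := by
    have : T - δ / 2 ≤ t₁ := le_max_right _ _
    linarith
  have osc : ∀ c : ℝ, 0 < c → ∃ t ∈ Set.Icc t₁ T, (g t).2 = Real.sin c := by
    intro c hc
    obtain ⟨N, hN⟩ := exists_nat_gt (max 0 (1 / (g t₁).1))
    have hN0 : (0:ℝ) ≤ N := le_trans (le_max_left _ _) hN.le
    set cc := c + N * (2 * π) with hcc
    have hcc_pos : 0 < cc := by positivity
    have hcc_gt : 1 / (g t₁).1 < cc := by
      have h1 : 1 / (g t₁).1 ≤ max 0 (1 / (g t₁).1) := le_max_right _ _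
      have h2 : (N:ℝ) ≤ N * (2 * π) := le_mul_of_one_le_right hN0 (by linarith)
      linarith
    have hv : cc⁻¹ < (g t₁).1 := by
      have h1 : 1 < cc * (g t₁).1 := (div_lt_iff₀ hxt₁).mp hcc_gt
      rw [inv_lt_iff_one_lt_mul₀' hcc_pos]
      linarith [mul_comm cc (g t₁).1]
    have hvmem : cc⁻¹ ∈ Set.Icc ((fun t => (g t).1) T) ((fun t => (g t).1) t₁) := by
      simp only
      rw [hT0]
      exact ⟨(inv_pos.mpr hcc_pos).le, hv.le⟩
    obtain ⟨t, htmem, htv⟩ := intermediate_value_Icc' ht₁T.le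
      ((continuous_fst.comp hg).continuousOn) hvmem
    refine ⟨t, htmem, ?_⟩
    have hgt : g t ∈ sineCurve ∪ segB := hrange t
    have htv' : (g t).1 = cc⁻¹ := htv
    have hvpos : 0 < (g t).1 := by rw [htv']; positivity
    rcases hgt with (⟨x, hx0, hx1, heq⟩ | ⟨h1, h2⟩) | ⟨h1, h2⟩
    · have hx : x = cc⁻¹ := by rw [heq] at htv'; exact htv'
      rw [heq]
      simp only
      rw [hx, one_div, inv_inv]
      have : Real.sin cc = Real.sin c := by
        rw [hcc]; exact Real.sin_add_nat_mul_two_pi c N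
      rw [this]
    · rw [h1] at hvpos; linarith
    · have := h2.2; linarith
  obtain ⟨tp, htpmem, htp⟩ := osc (π / 2) (by linarith)
  obtain ⟨tm, htmmem, htm⟩ := osc (π / 2 + π) (by linarith)
  have hsin1 : Real.sin (π / 2) = 1 := Real.sin_pi_div_two
  have hsin2 : Real.sin (π / 2 + π) = -1 := by
    rw [Real.sin_add_pi, Real.sin_pi_div_two]
  have hdist : ∀ t ∈ Set.Icc t₁ T, dist ((g t).2) y₀ < 1 := by
    intro t ht
    apply hδ
    rw [Real.dist_eq, abs_lt]
    constructor <;> linarith [ht.1, ht.2]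
  have h1 := hdist tp htpmem
  have h2 := hdist tm htmmem
  rw [htp, hsin1, Real.dist_eq, abs_lt] at h1
  rw [htm, hsin2, Real.dist_eq, abs_lt] at h2
  linarith [h1.1, h2.2]

lemma sinePt_mem_sineCurve {x : ℝ} (hx : x ∈ Set.Ioo (0:ℝ) 1) : sinePt x ∈ sineCurve :=
  Or.inl ⟨x, hx.1, hx.2.le, rfl⟩

lemma origin_mem_sineCurve : ((0:ℝ), (0:ℝ)) ∈ sineCurve :=
  Or.inr ⟨rfl, by norm_num⟩

lemma origin_mem_segB : ((0:ℝ), (0:ℝ)) ∈ segB :=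
  ⟨rfl, by norm_num⟩

lemma segB_eq : segB = (fun u : ℝ => (u, (0:ℝ))) '' Set.Icc (-1) 0 := by
  ext p
  constructor
  · rintro ⟨h1, h2⟩
    exact ⟨p.1, h2, by ext <;> simp [h1]⟩
  · rintro ⟨u, hu, rfl⟩
    exact ⟨rfl, hu⟩

lemma segB_subset_closure : segB ⊆ closure ((fun u : ℝ => (u, (0:ℝ))) '' Set.Ioo (-1) 0) := by
  rintro p ⟨h1, h2⟩
  have hcw : ContinuousWithinAt (fun u : ℝ => (u, (0:ℝ))) (Set.Ioo (-1) 0) p.1 :=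
    (continuous_id.prodMk continuous_const).continuousWithinAt
  have hcl : p.1 ∈ closure (Set.Ioo (-1:ℝ) 0) := by
    rw [closure_Ioo (by norm_num : (-1:ℝ) ≠ 0)]
    exact h2
  have := hcw.mem_closure_image hcl
  have hp : p = (p.1, (0:ℝ)) := by ext <;> simp [h1]
  rw [hp]
  exact this

theorem sineCurve_union_seg_connected_not_approxPathConnected :
    IsConnected (sineCurve ∪ segB) ∧
    ¬ ApproxPathConnected ↥(sineCurve ∪ segB) ∧
    ApproxPathConnected ↥sineCurve ∧
    ApproxPathConnected ↥segB ∧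
    (sineCurve ∩ segB).Nonempty := by
  have hDconn : IsConnected (sinePt '' Set.Ioo 0 1) := by
    apply IsConnected.image (isConnected_Ioo (by norm_num : (0:ℝ) < 1))
    exact fun x hx => (sinePt_continuousAt hx.1.ne').continuousWithinAt
  have hDsub : sinePt '' Set.Ioo 0 1 ⊆ sineCurve := by
    rintro p ⟨x, hx, rfl⟩
    exact sinePt_mem_sineCurve hx
  have hscconn : IsConnected sineCurve :=
    hDconn.subset_closure hDsub sineCurve_subset_closure
  have hsegconn : IsConnected segB := by
    rw [segB_eq]
    apply IsConnected.image (isConnected_Icc (by norm_num : (-1:ℝ) ≤ 0))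
    exact (continuous_id.prodMk continuous_const).continuousOn
  refine ⟨?_, ?_, ?_, ?_, ⟨((0:ℝ),(0:ℝ)), origin_mem_sineCurve, origin_mem_segB⟩⟩
  · exact IsConnected.union ⟨((0:ℝ),(0:ℝ)), origin_mem_sineCurve, origin_mem_segB⟩
      hscconn hsegconn
  · intro h
    set X := sineCurve ∪ segB with hX
    set V0 : Set ↥X := Subtype.val ⁻¹' {q : ℝ × ℝ | 1/2 < q.1} with hV0
    set V1 : Set ↥X := Subtype.val ⁻¹' {q : ℝ × ℝ | q.1 < -(1/2)} with hV1
    have hp1 : ((1:ℝ), Real.sin (1/1)) ∈ X := Or.inl (Or.inl ⟨1, one_pos, le_refl 1, rfl⟩)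
    have hp2 : ((-1:ℝ), (0:ℝ)) ∈ X := Or.inr ⟨rfl, by norm_num, by norm_num⟩
    obtain ⟨γ, hγ⟩ := h 2 ![V0, V1]
      (by
        intro k
        fin_cases k <;> simp only [Matrix.cons_val_zero, Matrix.cons_val_one, Matrix.head_cons]
        · exact (isOpen_lt continuous_const continuous_fst).preimage continuous_subtype_val
        · exact (isOpen_lt continuous_fst continuous_const).preimage continuous_subtype_val)
      (by
        intro k
        fin_cases k <;> simp only [Matrix.cons_val_zero, Matrix.cons_val_one, Matrix.head_cons]
        · exact ⟨⟨_, hp1⟩, by norm_num [hV0]⟩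
        · exact ⟨⟨_, hp2⟩, by norm_num [hV1]⟩)
    obtain ⟨t0, ht0mem, ht0⟩ := hγ 0
    obtain ⟨t1, ht1mem, ht1⟩ := hγ 1
    simp only [Matrix.cons_val_zero, Matrix.cons_val_one, Matrix.head_cons, hV0, hV1,
      Set.mem_preimage, Set.mem_setOf_eq] at ht0 ht1
    set g : ℝ → ℝ × ℝ := fun t => (γ (Set.projIcc 0 1 zero_le_one t) : ℝ × ℝ) with hg
    have hgc : Continuous g :=
      continuous_subtype_val.comp (γ.continuous.comp continuous_projIcc)
    have hgrange : ∀ t, g t ∈ sineCurve ∪ segB := fun t => (γ (Set.projIcc 0 1 zero_le_one t)).2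
    have hg0 : g ↑t0 = ↑(γ t0) := by
      simp only [hg, Set.projIcc_val]
    have hg1 : g ↑t1 = ↑(γ t1) := by
      simp only [hg, Set.projIcc_val]
    have hx0 : (1:ℝ)/2 < (g ↑t0).1 := by rw [hg0]; exact ht0
    have hx1 : (g ↑t1).1 < -(1/2) := by rw [hg1]; exact ht1
    rcases lt_trichotomy (t0:ℝ) (t1:ℝ) with hlt | heq | hgt
    · exact no_path_aux g hgc hgrange _ _ hlt (by linarith) (by linarith)
    · rw [show ((t0:ℝ)) = (t1:ℝ) from heq] at hx0
      linarith
    · refine no_path_aux (fun t => g (-t)) (hgc.comp continuous_neg)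
        (fun t => hgrange (-t)) (-(t0:ℝ)) (-(t1:ℝ)) (by linarith) ?_ ?_
      · simp only [neg_neg]; linarith
      · simp only [neg_neg]; linarith
  · apply key_approx sineCurve sinePt 0 1 one_pos
    · exact fun x hx => (sinePt_continuousAt hx.1.ne').continuousWithinAt
    · exact fun x hx => sinePt_mem_sineCurve hx
    · exact sineCurve_subset_closure
  · apply key_approx segB (fun u : ℝ => (u, (0:ℝ))) (-1) 0 (by norm_num)
    · exact (continuous_id.prodMk continuous_const).continuousOn
    · exact fun u hu => ⟨rfl, hu.1.le, hu.2.le⟩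
    · exact segB_subset_closure
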